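/- arXiv:2403.18937 — 4 statements merged into one kernel-verified Lean document; each statement's English description precedes it below -/
import Mathlib

section
/- Let V be a real vector space with a symmetric bilinear form g of Lorentzian signature (one minus, d pluses), and let h be another symmetric bilinear form on V that is null on exactly the same vectors as g (i.e., for all v, g(v,v)=0 iff h(v,v)=0). If h is nonzero, then there exists a nonzero real constant c such that h = c·g. -/
theorem stmt_0 (d : ℕ) (hd : 1 ≤ d) (V : Type*) [AddCommGroup V] [Module ℝ V]
    (g h : V →ₗ[ℝ] V →ₗ[ℝ] ℝ)
    (b : Module.Basis (Fin (d + 1)) ℝ V)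
    (hg : ∀ i j, g (b i) (b j) =
      if i = j then (if i = (0 : Fin (d + 1)) then (-1 : ℝ) else 1) else 0)
    (hgsymm : ∀ v w, g v w = g w v)
    (hhsymm : ∀ v w, h v w = h w v)
    (hnull : ∀ v : V, g v v = 0 ↔ h v v = 0)
    (hne : h ≠ 0) :
    ∃ c : ℝ, c ≠ 0 ∧ h = c • g := by
  -- step 1: off-diagonal with 0 vanishes, diagonal entries equal -h00
  have key1 : ∀ i : Fin (d + 1), i ≠ 0 →
      h (b 0) (b i) = 0 ∧ h (b i) (b i) = - h (b 0) (b 0) := by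
    intro i hi
    have hi0 : (0 : Fin (d + 1)) ≠ i := Ne.symm hi
    have gplus : g (b 0 + b i) (b 0 + b i) = 0 := by
      simp [map_add, LinearMap.add_apply, hg, hi, hi0]
    have gminus : g (b 0 - b i) (b 0 - b i) = 0 := by
      simp [map_sub, LinearMap.sub_apply, hg, hi, hi0]
    have hplus : h (b 0) (b 0) + 2 * h (b 0) (b i) + h (b i) (b i) = 0 := by
      have := (hnull _).mp gplus
      simp only [map_add, LinearMap.add_apply] at this
      rw [hhsymm (b i) (b 0)] at this
      linarith
    have hminus : h (b 0) (b 0) - 2 * h (b 0) (b i) + h (b i) (b i) = 0 := by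
      have := (hnull _).mp gminus
      simp only [map_sub, LinearMap.sub_apply] at this
      rw [hhsymm (b i) (b 0)] at this
      linarith
    constructor <;> linarith
  -- step 2: off-diagonal entries (both nonzero, distinct) vanish
  have key2 : ∀ i j : Fin (d + 1), i ≠ 0 → j ≠ 0 → i ≠ j →
      h (b i) (b j) = 0 := by
    intro i j hi hj hij
    have hi0 : (0 : Fin (d + 1)) ≠ i := Ne.symm hi
    have hj0 : (0 : Fin (d + 1)) ≠ j := Ne.symm hj
    have hji : j ≠ i := Ne.symm hij
    set s : ℝ := Real.sqrt 2 with hs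
    have hs2 : s * s = 2 := Real.mul_self_sqrt (by norm_num)
    have gnull : g (s • b 0 + b i + b j) (s • b 0 + b i + b j) = 0 := by
      simp only [map_add, map_smul, LinearMap.add_apply, LinearMap.smul_apply,
        smul_eq_mul, hg]
      simp [hi, hj, hi0, hj0, hij, hji]
      nlinarith [hs2]
    have hnullv := (hnull _).mp gnull
    simp only [map_add, map_smul, LinearMap.add_apply, LinearMap.smul_apply,
      smul_eq_mul] at hnullv
    rw [hhsymm (b i) (b 0), hhsymm (b j) (b 0), hhsymm (b j) (b i)] at hnullv
    have h0i := (key1 i hi).1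
    have h0j := (key1 j hj).1
    have hii := (key1 i hi).2
    have hjj := (key1 j hj).2
    rw [h0i, h0j, hii, hjj] at hnullv
    have e : s * (s * h (b 0) (b 0) + 0 + 0) = 2 * h (b 0) (b 0) := by
      rw [add_zero, add_zero, ← mul_assoc, hs2]
    linarith [hnullv, e]
  set c : ℝ := - h (b 0) (b 0) with hc
  have hentry : ∀ i j, h (b i) (b j) = c * g (b i) (b j) := by
    intro i j
    rw [hg]
    by_cases hij : i = j
    · subst hij
      by_cases hi : i = 0
      · subst hi; simp [hc]
      · simp [hi, (key1 i hi).2, hc]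
    · simp only [hij, if_false, mul_zero]
      by_cases hi : i = 0
      · subst hi
        exact (key1 j (fun hj => hij hj.symm)).1
      · by_cases hj : j = 0
        · subst hj
          rw [hhsymm]
          exact (key1 i hi).1
        · exact key2 i j hi hj hij
  have hcne : c ≠ 0 := by
    intro hc0
    apply hne
    apply b.ext; intro i
    apply b.ext; intro j
    simp [hentry i j, hc0]
  refine ⟨c, hcne, ?_⟩
  apply b.ext; intro i
  apply b.ext; intro j
  simp [hentry i j, smul_eq_mul]
end

section
/- Let g be a Lorentzian bilinear form on a real vector space V with a basis consisting of null vectors k, ℓ with g(k,ℓ) = -1, g(k,k) = g(ℓ,ℓ) = 0, and spacelike vectors s₁,…,s_{d-1} with g(sⱼ,s_m) = δ_{jm}, g(k,sⱼ) = g(ℓ,sⱼ) = 0. If h is a symmetric bilinear form with the same null vectors as g, then for every j: h(ℓ,sⱼ) = 0. -/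
theorem stmt_1 (d : ℕ) (hd : 2 ≤ d) (V : Type*) [AddCommGroup V] [Module ℝ V]
    (g h : V →ₗ[ℝ] V →ₗ[ℝ] ℝ)
    (b : Module.Basis (Fin (d + 1)) ℝ V)
    (k ℓ : V) (s : Fin (d - 1) → V)
    (hk : k = b 0) (hℓ : ℓ = b 1)
    (hs : ∀ j : Fin (d - 1), s j = b ⟨j.val + 2, by have := j.isLt; omega⟩)
    (hgsymm : ∀ v w, g v w = g w v)
    (hkl : g k ℓ = -1) (hkk : g k k = 0) (hll : g ℓ ℓ = 0)
    (hss : ∀ j m, g (s j) (s m) = if j = m then (1 : ℝ) else 0)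
    (hks : ∀ j, g k (s j) = 0) (hls : ∀ j, g ℓ (s j) = 0)
    (hhsymm : ∀ v w, h v w = h w v)
    (hnull : ∀ v : V, g v v = 0 ↔ h v v = 0) :
    ∀ j, h ℓ (s j) = 0 := by
  intro j
  have hllh : h ℓ ℓ = 0 := (hnull ℓ).mp hll
  have ha : h (s j) (s j) ≠ 0 := by
    intro h0
    have := (hnull (s j)).mpr h0
    rw [hss] at this
    simp at this
  set a := h (s j) (s j) with ha_def
  set c := h (s j) ℓ with hc_def
  set t : ℝ := -2 * c / a with ht_def
  set v : V := t • s j + ℓ with hv_def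
  have hhv : h v v = 0 := by
    have expand : h v v = t * t * a + 2 * t * c := by
      simp only [hv_def, map_add, map_smul, LinearMap.add_apply, LinearMap.smul_apply,
        smul_eq_mul, hllh]
      rw [hhsymm ℓ (s j)]
      ring
    rw [expand, ht_def]
    field_simp
    ring
  have hgv : g v v = t * t := by
    simp only [hv_def, map_add, map_smul, LinearMap.add_apply, LinearMap.smul_apply,
      smul_eq_mul, hll, hss j j]
    rw [hgsymm (s j) ℓ, hls j]
    simp
  have ht0 : t = 0 := by
    have := (hnull v).mpr hhv
    rw [hgv] at this
    nlinarith
  have hc0 : c = 0 := by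
    rw [ht_def] at ht0
    field_simp at ht0
    linarith
  rw [hhsymm ℓ (s j), ← hc_def, hc0]
end

section
/- A linear map T between real vector spaces equipped with Lorentzian bilinear forms g and g' that sends g-null vectors to g'-null vectors, and is bijective, must be a conformal map: there exists c > 0 or c < 0 with g'(Tv, Tw) = c·g(v,w) for all v, w (c nonzero). -/
theorem stmt_3 (d : ℕ) (hd : 1 ≤ d) (V W : Type*) [AddCommGroup V] [Module ℝ V]
    [AddCommGroup W] [Module ℝ W]
    (g : V →ₗ[ℝ] V →ₗ[ℝ] ℝ) (g' : W →ₗ[ℝ] W →ₗ[ℝ] ℝ)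
    (bV : Module.Basis (Fin (d + 1)) ℝ V) (bW : Module.Basis (Fin (d + 1)) ℝ W)
    (hgsymm : ∀ v w, g v w = g w v) (hg'symm : ∀ v w, g' v w = g' w v)
    (hg : ∀ i j, g (bV i) (bV j) =
      if i = j then (if i = (0 : Fin (d + 1)) then (-1 : ℝ) else 1) else 0)
    (hg' : ∀ i j, g' (bW i) (bW j) =
      if i = j then (if i = (0 : Fin (d + 1)) then (-1 : ℝ) else 1) else 0)
    (T : V →ₗ[ℝ] W) (hT : Function.Bijective T)
    (hnull : ∀ v : V, g v v = 0 → g' (T v) (T v) = 0) :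
    ∃ c : ℝ, c ≠ 0 ∧ ∀ v w, g' (T v) (T w) = c * g v w := by
  set h : V →ₗ[ℝ] V →ₗ[ℝ] ℝ := g'.compl₁₂ T T with hh
  have hap : ∀ v w, h v w = g' (T v) (T w) := fun v w => rfl
  set c : ℝ := -(h (bV 0) (bV 0)) with hc
  -- key lemma 1 : for i ≠ 0, h 0 i = 0 and h i i = -h 0 0
  have key1 : ∀ i : Fin (d+1), i ≠ 0 →
      h (bV 0) (bV i) = 0 ∧ h (bV i) (bV i) = -(h (bV 0) (bV 0)) := by
    intro i hi
    have hA : g (bV 0 + bV i) (bV 0 + bV i) = 0 := by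
      simp [map_add, hg, hi, (Ne.symm hi)]
    have hB : g (bV 0 - bV i) (bV 0 - bV i) = 0 := by
      simp [map_sub, hg, hi, (Ne.symm hi)]
    have hA' := hnull _ hA
    have hB' := hnull _ hB
    simp only [map_add, map_sub, LinearMap.add_apply, LinearMap.sub_apply] at hA' hB'
    have hs : g' (T (bV i)) (T (bV 0)) = g' (T (bV 0)) (T (bV i)) := hg'symm _ _
    constructor <;> [skip; skip] <;> simp only [hap] <;> linarith
  -- key lemma 2 : for i ≠ j, both ≠ 0, h i j = 0
  have key2 : ∀ i j : Fin (d+1), i ≠ 0 → j ≠ 0 → i ≠ j → h (bV i) (bV j) = 0 := by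
    intro i j hi hj hij
    obtain ⟨h0i, hii⟩ := key1 i hi
    obtain ⟨h0j, hjj⟩ := key1 j hj
    have hA : g (Real.sqrt 2 • bV 0 + bV i + bV j) (Real.sqrt 2 • bV 0 + bV i + bV j) = 0 := by
      simp [map_add, map_smul, hg, hi, hj, hij, (Ne.symm hi), (Ne.symm hj), (Ne.symm hij),
        smul_eq_mul]
      norm_num
    have hA' := hnull _ hA
    simp only [map_add, map_smul, LinearMap.add_apply, LinearMap.smul_apply,
      smul_eq_mul] at hA'
    have hs1 : g' (T (bV i)) (T (bV 0)) = g' (T (bV 0)) (T (bV i)) := hg'symm _ _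
    have hs2 : g' (T (bV j)) (T (bV 0)) = g' (T (bV 0)) (T (bV j)) := hg'symm _ _
    have hs3 : g' (T (bV j)) (T (bV i)) = g' (T (bV i)) (T (bV j)) := hg'symm _ _
    simp only [hap] at h0i hii h0j hjj ⊢
    rw [hs1, hs2, hs3, h0i, h0j, hii, hjj] at hA'
    have h2 : Real.sqrt 2 * Real.sqrt 2 = 2 := Real.mul_self_sqrt (by norm_num)
    linear_combination hA'/2 - (g' (T (bV 0))) (T (bV 0)) * h2 / 2
  -- basis formula
  have hbasis : ∀ i j : Fin (d+1), h (bV i) (bV j) = c * g (bV i) (bV j) := by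
    intro i j
    rcases eq_or_ne i j with rfl | hij
    · rcases eq_or_ne i 0 with rfl | hi
      · simp [hg, hc]
      · obtain ⟨_, hii⟩ := key1 i hi
        simp [hg, hi, hc, hii]
    · rcases eq_or_ne i 0 with rfl | hi
      · rcases eq_or_ne j 0 with rfl | hj
        · exact absurd rfl hij
        · obtain ⟨h0j, _⟩ := key1 j hj
          simp [hg, hij, h0j]
      · rcases eq_or_ne j 0 with rfl | hj
        · obtain ⟨h0i, _⟩ := key1 i hi
          have : h (bV i) (bV 0) = 0 := by
            simp only [hap] at h0i ⊢
            rw [hg'symm]; exact h0i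
          simp [hg, hij, this]
        · simp [hg, hij, key2 i j hi hj hij]
  have heq : h = c • g := LinearMap.ext_basis bV bV hbasis
  have hform : ∀ v w, g' (T v) (T w) = c * g v w := by
    intro v w
    have h1 : h v w = (c • g) v w := congrArg (fun f => (f v : V →ₗ[ℝ] ℝ) w) heq
    simpa [hap] using h1
  refine ⟨c, ?_, hform⟩
  intro hc0
  obtain ⟨v, hv⟩ := hT.2 (bW 0)
  have := hform v v
  rw [hv, hc0, zero_mul, hg'] at this
  simp at this
end

section
/- Let f : ℂ² ∖ {0} → ℂ be holomorphic (continuous and separately holomorphic in each variable). Then f extends to a holomorphic function on all of ℂ² (Hartogs' extension for a point singularity in dimension 2). -/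
open Complex Metric Set intervalIntegral Real MeasureTheory


noncomputable def kern (f : ℂ × ℂ → ℂ) (a b : ℂ) (r : ℝ) (p : ℂ × ℂ) (s t : ℝ) : ℂ :=
  deriv (circleMap a r) s • ((circleMap a r s - p.1)⁻¹ •
    (deriv (circleMap b r) t • ((circleMap b r t - p.2)⁻¹ • f (circleMap a r s, circleMap b r t))))

noncomputable def inn (f : ℂ × ℂ → ℂ) (a b : ℂ) (r : ℝ) (p : ℂ × ℂ) (s : ℝ) : ℂ :=
  ∫ t in (0:ℝ)..(2*π), kern f a b r p s t

noncomputable def Phi (f : ℂ × ℂ → ℂ) (a b : ℂ) (r : ℝ) (p : ℂ × ℂ) : ℂ :=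
  ((2*π*I : ℂ)⁻¹ * (2*π*I : ℂ)⁻¹) * ∫ s in (0:ℝ)..(2*π), inn f a b r p s

lemma inn_eq_circle (f : ℂ × ℂ → ℂ) (a b : ℂ) (r : ℝ) (p : ℂ × ℂ) (s : ℝ) :
    inn f a b r p s = deriv (circleMap a r) s • ((circleMap a r s - p.1)⁻¹ •
      ∮ η in C(b, r), (η - p.2)⁻¹ • f (circleMap a r s, η)) := by
  simp only [inn, kern, circleIntegral, smul_eq_mul, ← intervalIntegral.integral_const_mul]

lemma phi_eq (f : ℂ × ℂ → ℂ) (a b : ℂ) (r : ℝ) (p : ℂ × ℂ)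
    (h1 : ∀ s : ℝ, DiffContOnCl ℂ (fun η => f (circleMap a r s, η)) (ball b r))
    (h2 : DiffContOnCl ℂ (fun ζ => f (ζ, p.2)) (ball a r))
    (hp1 : p.1 ∈ ball a r) (hp2 : p.2 ∈ ball b r) :
    Phi f a b r p = f p := by
  have key : ∀ s : ℝ, inn f a b r p s =
      (2*π*I : ℂ) * (deriv (circleMap a r) s • ((circleMap a r s - p.1)⁻¹ • f (circleMap a r s, p.2))) := by
    intro s
    rw [inn_eq_circle, (h1 s).circleIntegral_sub_inv_smul hp2]
    simp only [smul_eq_mul]; ring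
  have : (∫ s in (0:ℝ)..(2*π), inn f a b r p s)
      = (2*π*I : ℂ) * ∮ ζ in C(a, r), (ζ - p.1)⁻¹ • f (ζ, p.2) := by
    simp only [circleIntegral]
    rw [← intervalIntegral.integral_const_mul]
    refine intervalIntegral.integral_congr fun s _ => ?_
    rw [key s]
  rw [Phi, this, h2.circleIntegral_sub_inv_smul hp1]
  have h2pi : (2*π*I : ℂ) ≠ 0 := Complex.two_pi_I_ne_zero
  field_simp [smul_eq_mul]
  ring

noncomputable def kernD (f : ℂ × ℂ → ℂ) (a b : ℂ) (r : ℝ) (x : ℂ × ℂ) (s t : ℝ) :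
    (ℂ × ℂ) →L[ℂ] ℂ :=
  (deriv (circleMap a r) s * deriv (circleMap b r) t * f (circleMap a r s, circleMap b r t)) •
    ((circleMap a r s - x.1)⁻¹ •
        (((circleMap b r t - x.2)⁻¹ ^ 2) • ContinuousLinearMap.snd ℂ ℂ ℂ) +
      (circleMap b r t - x.2)⁻¹ •
        (((circleMap a r s - x.1)⁻¹ ^ 2) • ContinuousLinearMap.fst ℂ ℂ ℂ))

lemma kern_hasFDerivAt (f : ℂ × ℂ → ℂ) (a b : ℂ) (r : ℝ) (x : ℂ × ℂ) (s t : ℝ)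
    (h1 : circleMap a r s ≠ x.1) (h2 : circleMap b r t ≠ x.2) :
    HasFDerivAt (fun p => kern f a b r p s t) (kernD f a b r x s t) x := by
  have e : (fun p : ℂ × ℂ => kern f a b r p s t) = fun p =>
      (deriv (circleMap a r) s * deriv (circleMap b r) t * f (circleMap a r s, circleMap b r t)) *
        ((circleMap a r s - p.1)⁻¹ * (circleMap b r t - p.2)⁻¹) := by
    funext p; simp only [kern, smul_eq_mul]; ring
  rw [e]
  have hu : HasDerivAt (fun z : ℂ => (circleMap a r s - z)⁻¹)
      ((circleMap a r s - x.1)⁻¹ ^ 2) x.1 := by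
    have h := ((hasDerivAt_id x.1).const_sub (circleMap a r s)).inv (sub_ne_zero.2 h1)
    exact h.congr_deriv (by simp [inv_pow])
  have hv : HasDerivAt (fun z : ℂ => (circleMap b r t - z)⁻¹)
      ((circleMap b r t - x.2)⁻¹ ^ 2) x.2 := by
    have h := ((hasDerivAt_id x.2).const_sub (circleMap b r t)).inv (sub_ne_zero.2 h2)
    exact h.congr_deriv (by simp [inv_pow])
  have hU : HasFDerivAt (fun p : ℂ × ℂ => (circleMap a r s - p.1)⁻¹)
      (((circleMap a r s - x.1)⁻¹ ^ 2) • ContinuousLinearMap.fst ℂ ℂ ℂ) x :=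
    hu.comp_hasFDerivAt x (hasFDerivAt_fst)
  have hV : HasFDerivAt (fun p : ℂ × ℂ => (circleMap b r t - p.2)⁻¹)
      (((circleMap b r t - x.2)⁻¹ ^ 2) • ContinuousLinearMap.snd ℂ ℂ ℂ) x :=
    hv.comp_hasFDerivAt x (hasFDerivAt_snd)
  exact (hU.mul hV).const_mul _

lemma kernD_norm_le (f : ℂ × ℂ → ℂ) (a b : ℂ) (r : ℝ) (x : ℂ × ℂ) (s t : ℝ) {M ε : ℝ}
    (hM : ‖f (circleMap a r s, circleMap b r t)‖ ≤ M) (hε : 0 < ε)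
    (h1 : ε ≤ ‖circleMap a r s - x.1‖) (h2 : ε ≤ ‖circleMap b r t - x.2‖) (hr : 0 ≤ r) :
    ‖kernD f a b r x s t‖ ≤ r * r * M * (2 * (ε⁻¹ * ε⁻¹ * ε⁻¹)) := by
  have hM0 : 0 ≤ M := le_trans (norm_nonneg _) hM
  have hd1 : ‖deriv (circleMap a r) s‖ = r := by
    simp [deriv_circleMap, norm_circleMap_zero, _root_.abs_of_nonneg hr]
  have hd2 : ‖deriv (circleMap b r) t‖ = r := by
    simp [deriv_circleMap, norm_circleMap_zero, _root_.abs_of_nonneg hr]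
  have hia : ‖(circleMap a r s - x.1)⁻¹‖ ≤ ε⁻¹ := by
    rw [norm_inv]; exact inv_anti₀ hε h1
  have hib : ‖(circleMap b r t - x.2)⁻¹‖ ≤ ε⁻¹ := by
    rw [norm_inv]; exact inv_anti₀ hε h2
  have hε' : (0:ℝ) ≤ ε⁻¹ := by positivity
  have hfst : ‖ContinuousLinearMap.fst ℂ ℂ ℂ‖ ≤ 1 := by
    refine ContinuousLinearMap.opNorm_le_bound _ zero_le_one fun p => ?_
    simpa using le_trans (le_max_left _ _) (le_of_eq (Prod.norm_def p).symm)
  have hsnd : ‖ContinuousLinearMap.snd ℂ ℂ ℂ‖ ≤ 1 := by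
    refine ContinuousLinearMap.opNorm_le_bound _ zero_le_one fun p => ?_
    simpa using le_trans (le_max_right _ _) (le_of_eq (Prod.norm_def p).symm)
  rw [kernD]
  have hbA : ‖deriv (circleMap a r) s * deriv (circleMap b r) t *
      f (circleMap a r s, circleMap b r t)‖ ≤ r * r * M := by
    rw [norm_mul, norm_mul, hd1, hd2]
    exact mul_le_mul_of_nonneg_left hM (by positivity)
  have hb1 : ‖(circleMap a r s - x.1)⁻¹ •
      (((circleMap b r t - x.2)⁻¹ ^ 2) • ContinuousLinearMap.snd ℂ ℂ ℂ)‖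
      ≤ ε⁻¹ * (ε⁻¹ * ε⁻¹) := by
    refine le_trans (ContinuousLinearMap.opNorm_smul_le _ _) ?_
    refine mul_le_mul hia (le_trans (ContinuousLinearMap.opNorm_smul_le _ _) ?_) (norm_nonneg _) hε'
    rw [norm_pow]
    calc ‖(circleMap b r t - x.2)⁻¹‖^2 * ‖ContinuousLinearMap.snd ℂ ℂ ℂ‖
        ≤ (ε⁻¹)^2 * 1 := mul_le_mul (pow_le_pow_left₀ (norm_nonneg _) hib 2) hsnd
          (norm_nonneg _) (by positivity)
      _ = ε⁻¹ * ε⁻¹ := by ring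
  have hb2 : ‖(circleMap b r t - x.2)⁻¹ •
      (((circleMap a r s - x.1)⁻¹ ^ 2) • ContinuousLinearMap.fst ℂ ℂ ℂ)‖
      ≤ ε⁻¹ * (ε⁻¹ * ε⁻¹) := by
    refine le_trans (ContinuousLinearMap.opNorm_smul_le _ _) ?_
    refine mul_le_mul hib (le_trans (ContinuousLinearMap.opNorm_smul_le _ _) ?_) (norm_nonneg _) hε'
    rw [norm_pow]
    calc ‖(circleMap a r s - x.1)⁻¹‖^2 * ‖ContinuousLinearMap.fst ℂ ℂ ℂ‖
        ≤ (ε⁻¹)^2 * 1 := mul_le_mul (pow_le_pow_left₀ (norm_nonneg _) hia 2) hfst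
          (norm_nonneg _) (by positivity)
      _ = ε⁻¹ * ε⁻¹ := by ring
  calc ‖_‖ ≤ (r * r * M) * (ε⁻¹ * (ε⁻¹ * ε⁻¹) + ε⁻¹ * (ε⁻¹ * ε⁻¹)) := by
        refine le_trans (ContinuousLinearMap.opNorm_smul_le _ _) ?_
        exact mul_le_mul hbA (le_trans (norm_add_le _ _) (add_le_add hb1 hb2))
          (norm_nonneg _) (by positivity)
    _ = r * r * M * (2 * (ε⁻¹ * ε⁻¹ * ε⁻¹)) := by ring

lemma den_lb {z a : ℂ} {r : ℝ} (s : ℝ) : r - dist z a ≤ ‖circleMap a r s - z‖ ∨ r < 0 := by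
  rcases lt_or_ge r 0 with h | h
  · exact Or.inr h
  · left
    have h1 : ‖circleMap a r s - a‖ - ‖z - a‖ ≤ ‖circleMap a r s - a - (z - a)‖ :=
      norm_sub_norm_le _ _
    have h2 : ‖circleMap a r s - a‖ = r := by
      rw [circleMap_sub_center]
      simp [norm_circleMap_zero, _root_.abs_of_nonneg h]
    have h3 : circleMap a r s - a - (z - a) = circleMap a r s - z := by ring
    rw [h2, h3] at h1
    simpa [dist_eq_norm] using h1

lemma den_lb' {z a : ℂ} {r : ℝ} (hr : 0 ≤ r) (s : ℝ) :
    r - dist z a ≤ ‖circleMap a r s - z‖ :=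
  (den_lb s).resolve_right (not_lt.2 hr)

section cont

variable {f : ℂ × ℂ → ℂ} {a b : ℂ} {r : ℝ} {x : ℂ × ℂ}

lemma fcomp_cont (hr : 0 < r) (hf : ContinuousOn f (sphere a r ×ˢ sphere b r)) :
    Continuous (fun st : ℝ × ℝ => f (circleMap a r st.1, circleMap b r st.2)) := by
  refine hf.comp_continuous
    (((continuous_circleMap a r).comp continuous_fst).prodMk
      ((continuous_circleMap b r).comp continuous_snd)) fun st => ?_
  exact ⟨circleMap_mem_sphere a hr.le _, circleMap_mem_sphere b hr.le _⟩

lemma den_ne {z a : ℂ} {r : ℝ} (hr : 0 < r) (hx : dist z a < r) (s : ℝ) :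
    circleMap a r s - z ≠ 0 := by
  have h := den_lb' (z := z) (a := a) hr.le s
  have : (0:ℝ) < ‖circleMap a r s - z‖ := lt_of_lt_of_le (by linarith) h
  simpa [norm_pos_iff] using this

lemma kern_cont (hr : 0 < r) (hf : ContinuousOn f (sphere a r ×ˢ sphere b r))
    (hx1 : dist x.1 a < r) (hx2 : dist x.2 b < r) :
    Continuous (fun st : ℝ × ℝ => kern f a b r x st.1 st.2) := by
  have c1 : Continuous fun st : ℝ × ℝ => (circleMap a r st.1 - x.1)⁻¹ :=
    (((continuous_circleMap a r).comp continuous_fst).sub continuous_const).inv₀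
      fun st => den_ne hr hx1 _
  have c2 : Continuous fun st : ℝ × ℝ => (circleMap b r st.2 - x.2)⁻¹ :=
    (((continuous_circleMap b r).comp continuous_snd).sub continuous_const).inv₀
      fun st => den_ne hr hx2 _
  have d1 : Continuous fun st : ℝ × ℝ => deriv (circleMap a r) st.1 := by
    simp only [deriv_circleMap]
    exact (((continuous_circleMap 0 r).comp continuous_fst).mul continuous_const)
  have d2 : Continuous fun st : ℝ × ℝ => deriv (circleMap b r) st.2 := by
    simp only [deriv_circleMap]
    exact (((continuous_circleMap 0 r).comp continuous_snd).mul continuous_const)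
  simp only [kern, smul_eq_mul]
  exact d1.mul (c1.mul (d2.mul (c2.mul (fcomp_cont hr hf))))

lemma kernD_cont (hr : 0 < r) (hf : ContinuousOn f (sphere a r ×ˢ sphere b r))
    (hx1 : dist x.1 a < r) (hx2 : dist x.2 b < r) :
    Continuous (fun st : ℝ × ℝ => kernD f a b r x st.1 st.2) := by
  have c1 : Continuous fun st : ℝ × ℝ => (circleMap a r st.1 - x.1)⁻¹ :=
    (((continuous_circleMap a r).comp continuous_fst).sub continuous_const).inv₀
      fun st => den_ne hr hx1 _
  have c2 : Continuous fun st : ℝ × ℝ => (circleMap b r st.2 - x.2)⁻¹ :=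
    (((continuous_circleMap b r).comp continuous_snd).sub continuous_const).inv₀
      fun st => den_ne hr hx2 _
  have d1 : Continuous fun st : ℝ × ℝ => deriv (circleMap a r) st.1 := by
    simp only [deriv_circleMap]
    exact (((continuous_circleMap 0 r).comp continuous_fst).mul continuous_const)
  have d2 : Continuous fun st : ℝ × ℝ => deriv (circleMap b r) st.2 := by
    simp only [deriv_circleMap]
    exact (((continuous_circleMap 0 r).comp continuous_snd).mul continuous_const)
  simp only [kernD]
  exact ((d1.mul d2).mul (fcomp_cont hr hf)).smul
    ((c1.smul ((c2.pow 2).smul continuous_const)).add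
      (c2.smul ((c1.pow 2).smul continuous_const)))

end cont

section diff
variable {f : ℂ × ℂ → ℂ} {a b : ℂ} {r : ℝ} {x₀ : ℂ × ℂ}

lemma phi_diff (hr : 0 < r) (hf : ContinuousOn f (sphere a r ×ˢ sphere b r))
    (hx1 : dist x₀.1 a < r) (hx2 : dist x₀.2 b < r) :
    DifferentiableAt ℂ (Phi f a b r) x₀ := by
  obtain ⟨M, hM⟩ : ∃ M, ∀ y ∈ sphere a r ×ˢ sphere b r, ‖f y‖ ≤ M :=
    ((isCompact_sphere a r).prod (isCompact_sphere b r)).exists_bound_of_continuousOn hf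
  have hMf : ∀ s t : ℝ, ‖f (circleMap a r s, circleMap b r t)‖ ≤ M := fun s t =>
    hM _ ⟨circleMap_mem_sphere a hr.le _, circleMap_mem_sphere b hr.le _⟩
  set ε : ℝ := min (r - dist x₀.1 a) (r - dist x₀.2 b) / 2 with hε_def
  have hε : 0 < ε := by
    apply div_pos _ two_pos
    exact lt_min (by linarith) (by linarith)
  -- membership facts for points of `ball x₀ ε`
  have hball : ∀ y ∈ ball x₀ ε, dist y.1 a < r - ε ∧ dist y.2 b < r - ε := by
    intro y hy
    have h1 : dist y.1 x₀.1 < ε := lt_of_le_of_lt (le_trans (le_max_left _ _)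
      (le_of_eq (Prod.dist_eq (x := y) (y := x₀)).symm)) hy
    have h2 : dist y.2 x₀.2 < ε := lt_of_le_of_lt (le_trans (le_max_right _ _)
      (le_of_eq (Prod.dist_eq (x := y) (y := x₀)).symm)) hy
    constructor
    · have := dist_triangle y.1 x₀.1 a
      have hε1 : ε ≤ (r - dist x₀.1 a) / 2 := by
        apply div_le_div_of_nonneg_right (min_le_left _ _) (by norm_num)
      linarith
    · have := dist_triangle y.2 x₀.2 b
      have hε2 : ε ≤ (r - dist x₀.2 b) / 2 := by
        apply div_le_div_of_nonneg_right (min_le_right _ _) (by norm_num)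
      linarith
  have hden : ∀ y ∈ ball x₀ ε, ∀ s : ℝ,
      ε ≤ ‖circleMap a r s - y.1‖ ∧ ε ≤ ‖circleMap b r s - y.2‖ := by
    intro y hy s
    obtain ⟨h1, h2⟩ := hball y hy
    exact ⟨le_trans (by linarith) (den_lb' hr.le s), le_trans (by linarith) (den_lb' hr.le s)⟩
  have hballmem : ∀ y ∈ ball x₀ ε, dist y.1 a < r ∧ dist y.2 b < r := by
    intro y hy
    obtain ⟨h1, h2⟩ := hball y hy
    exact ⟨by linarith, by linarith⟩
  set C : ℝ := r * r * M * (2 * (ε⁻¹ * ε⁻¹ * ε⁻¹)) with hC_def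
  -- inner derivative
  have inner_diff : ∀ s : ℝ, ∀ x ∈ ball x₀ ε,
      HasFDerivAt (fun y => inn f a b r y s)
        (∫ t in (0:ℝ)..(2*π), kernD f a b r x s t) x := by
    intro s x hx
    have hx' : dist x.1 a < r ∧ dist x.2 b < r := hballmem x hx
    set ε' : ℝ := ε - dist x x₀ with hε'_def
    have hε' : 0 < ε' := by simp [hε'_def, mem_ball] at hx ⊢; linarith
    have hsub : ball x ε' ⊆ ball x₀ ε := by
      intro y hy
      rw [mem_ball] at hy ⊢
      have := dist_triangle y x x₀
      simp only [hε'_def] at hy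
      linarith
    have := intervalIntegral.hasFDerivAt_integral_of_dominated_of_fderiv_le
      (𝕜 := ℂ) (μ := volume) (F := fun y t => kern f a b r y s t)
      (F' := fun y t => kernD f a b r y s t) (x₀ := x) (a := (0:ℝ)) (b := 2*π)
      (bound := fun _ => C) (ball_mem_nhds x hε')
      ?_ ?_ ?_ ?_ ?_ ?_
    · exact this
    · -- measurability of t ↦ kern y s t for y near x
      filter_upwards [ball_mem_nhds x hε'] with y hy
      have hy' := hballmem y (hsub hy)
      exact (Continuous.aestronglyMeasurable (by
        have := kern_cont (x := y) hr hf hy'.1 hy'.2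
        exact this.comp (continuous_const.prodMk continuous_id)))
    · exact ((kern_cont (x := x) hr hf hx'.1 hx'.2).comp
        (continuous_const.prodMk continuous_id)).intervalIntegrable 0 (2*π)
    · exact ((kernD_cont (x := x) hr hf hx'.1 hx'.2).comp
        (continuous_const.prodMk continuous_id)).aestronglyMeasurable
    · refine Filter.Eventually.of_forall fun t _ y hy => ?_
      have hy' := hsub hy
      exact kernD_norm_le f a b r y s t (hMf s t) hε (hden y hy' s).1 (hden y hy' t).2 hr.le
    · exact intervalIntegrable_const
    · refine Filter.Eventually.of_forall fun t _ y hy => ?_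
      have hy' := hsub hy
      refine kern_hasFDerivAt f a b r y s t ?_ ?_
      · have := (hden y hy' s).1
        intro hne; rw [hne] at this; simp at this; linarith
      · have := (hden y hy' t).2
        intro hne; rw [hne] at this; simp at this; linarith
  -- bound on the inner derivative
  have inner_bound : ∀ s : ℝ, ∀ x ∈ ball x₀ ε,
      ‖∫ t in (0:ℝ)..(2*π), kernD f a b r x s t‖ ≤ C * (2*π) := by
    intro s x hx
    have : ‖∫ t in (0:ℝ)..(2*π), kernD f a b r x s t‖ ≤ C * |2*π - 0| := by
      apply intervalIntegral.norm_integral_le_of_norm_le_const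
      intro t ht
      exact kernD_norm_le f a b r x s t (hMf s t) hε (hden x hx s).1 (hden x hx t).2 hr.le
    simpa [_root_.abs_of_nonneg Real.two_pi_pos.le] using this
  -- outer application
  have outer : HasFDerivAt (fun x => ∫ s in (0:ℝ)..(2*π), inn f a b r x s)
      (∫ s in (0:ℝ)..(2*π), ∫ t in (0:ℝ)..(2*π), kernD f a b r x₀ s t) x₀ := by
    apply intervalIntegral.hasFDerivAt_integral_of_dominated_of_fderiv_le
      (𝕜 := ℂ) (μ := volume)
      (F' := fun x s => ∫ t in (0:ℝ)..(2*π), kernD f a b r x s t)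
      (bound := fun _ => C * (2*π)) (ball_mem_nhds x₀ hε)
    · filter_upwards [ball_mem_nhds x₀ hε] with y hy
      have hy' := hballmem y hy
      refine Continuous.aestronglyMeasurable ?_
      have : Continuous fun s : ℝ => ∫ t in (0:ℝ)..(2*π), kern f a b r y s t := by
        apply intervalIntegral.continuous_parametric_intervalIntegral_of_continuous'
        exact kern_cont (x := y) hr hf hy'.1 hy'.2
      exact this
    · have hx₀ : x₀ ∈ ball x₀ ε := mem_ball_self hε
      have : Continuous fun s : ℝ => inn f a b r x₀ s := by
        simp only [inn]
        apply intervalIntegral.continuous_parametric_intervalIntegral_of_continuous'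
        exact kern_cont (x := x₀) hr hf hx1 hx2
      exact this.intervalIntegrable 0 (2*π)
    · refine Continuous.aestronglyMeasurable ?_
      apply intervalIntegral.continuous_parametric_intervalIntegral_of_continuous'
      exact kernD_cont (x := x₀) hr hf hx1 hx2
    · exact Filter.Eventually.of_forall fun s _ x hx => inner_bound s x hx
    · exact intervalIntegrable_const
    · exact Filter.Eventually.of_forall fun s _ x hx => inner_diff s x hx
  have : DifferentiableAt ℂ (fun x => ∫ s in (0:ℝ)..(2*π), inn f a b r x s) x₀ :=
    outer.differentiableAt
  have h := this.const_mul ((2*π*I : ℂ)⁻¹ * (2*π*I : ℂ)⁻¹)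
  exact h

end diff

section main
variable {f : ℂ × ℂ → ℂ}

lemma pair_ne_zero_left {z w : ℂ} (h : z ≠ 0) : (z, w) ≠ (0 : ℂ × ℂ) := by
  intro hc
  exact h (by simpa using congrArg Prod.fst hc)

lemma pair_ne_zero_right {z w : ℂ} (h : w ≠ 0) : (z, w) ≠ (0 : ℂ × ℂ) := by
  intro hc
  exact h (by simpa using congrArg Prod.snd hc)

lemma osgood (hcont : ContinuousOn f {p : ℂ × ℂ | p ≠ 0})
    (hsep : ∀ p : ℂ × ℂ, p ≠ 0 →
      DifferentiableAt ℂ (fun z => f (z, p.2)) p.1 ∧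
      DifferentiableAt ℂ (fun w => f (p.1, w)) p.2)
    {p₀ : ℂ × ℂ} (hp₀ : p₀ ≠ 0) : DifferentiableAt ℂ f p₀ := by
  set m : ℝ := max ‖p₀.1‖ ‖p₀.2‖ with hm_def
  have hm : 0 < m := by
    rcases (by simpa [Prod.ext_iff] using hp₀ : ¬(p₀.1 = 0 ∧ p₀.2 = 0)) with h
    rcases Classical.em (p₀.1 = 0) with h1 | h1
    · have h2 : p₀.2 ≠ 0 := fun h2 => h ⟨h1, h2⟩
      exact lt_max_of_lt_right (norm_pos_iff.2 h2)
    · exact lt_max_of_lt_left (norm_pos_iff.2 h1)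
  set r : ℝ := m / 2 with hr_def
  have hr : 0 < r := by positivity
  have hsub : closedBall p₀.1 r ×ˢ closedBall p₀.2 r ⊆ {p : ℂ × ℂ | p ≠ 0} := by
    rintro ⟨z, w⟩ ⟨hz, hw⟩ hzero
    have hz0 : z = 0 := by simpa using congrArg Prod.fst hzero
    have hw0 : w = 0 := by simpa using congrArg Prod.snd hzero
    rw [hz0] at hz; rw [hw0] at hw
    simp only [mem_closedBall, dist_zero_left] at hz hw
    have : m ≤ r := max_le (by simpa [dist_eq_norm, dist_comm] using hz)
      (by simpa [dist_eq_norm, dist_comm] using hw)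
    rw [hr_def] at this; linarith
  have hmem : ∀ z ∈ closedBall p₀.1 r, ∀ w ∈ closedBall p₀.2 r, ((z, w) : ℂ × ℂ) ≠ 0 :=
    fun z hz w hw => hsub ⟨hz, hw⟩
  have hf : ContinuousOn f (sphere p₀.1 r ×ˢ sphere p₀.2 r) :=
    hcont.mono fun q hq => hsub ⟨sphere_subset_closedBall hq.1, sphere_subset_closedBall hq.2⟩
  have h1 : ∀ s : ℝ, DiffContOnCl ℂ (fun η => f (circleMap p₀.1 r s, η)) (ball p₀.2 r) := by
    intro s
    have hζ : circleMap p₀.1 r s ∈ closedBall p₀.1 r :=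
      sphere_subset_closedBall (circleMap_mem_sphere _ hr.le _)
    constructor
    · intro η hη
      exact ((hsep (circleMap p₀.1 r s, η)
        (hmem _ hζ _ (ball_subset_closedBall hη))).2).differentiableWithinAt
    · rw [closure_ball _ hr.ne']
      refine (hcont.comp ((Continuous.prodMk_right _).continuousOn) ?_)
      intro η hη
      exact hmem _ hζ _ hη
  have h2 : ∀ w ∈ closedBall p₀.2 r, DiffContOnCl ℂ (fun ζ => f (ζ, w)) (ball p₀.1 r) := by
    intro w hw
    constructor
    · intro ζ hζ
      exact ((hsep (ζ, w) (hmem _ (ball_subset_closedBall hζ) _ hw)).1).differentiableWithinAt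
    · rw [closure_ball _ hr.ne']
      refine (hcont.comp ?_ ?_)
      · exact (continuous_id.prodMk continuous_const).continuousOn
      · intro ζ hζ
        exact hmem _ hζ _ hw
  have heq : f =ᶠ[nhds p₀] Phi f p₀.1 p₀.2 r := by
    have hopen : (ball p₀.1 r ×ˢ ball p₀.2 r : Set (ℂ × ℂ)) ∈ nhds p₀ :=
      (isOpen_ball.prod isOpen_ball).mem_nhds ⟨mem_ball_self hr, mem_ball_self hr⟩
    filter_upwards [hopen] with q hq
    exact (phi_eq f p₀.1 p₀.2 r q h1 (h2 q.2 (ball_subset_closedBall hq.2)) hq.1 hq.2).symm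
  exact (phi_diff hr hf (by simpa using hr) (by simpa using hr)).congr_of_eventuallyEq heq

theorem stmt_5 (f : ℂ × ℂ → ℂ)
    (hcont : ContinuousOn f {p : ℂ × ℂ | p ≠ 0})
    (hsep : ∀ p : ℂ × ℂ, p ≠ 0 →
      DifferentiableAt ℂ (fun z => f (z, p.2)) p.1 ∧
      DifferentiableAt ℂ (fun w => f (p.1, w)) p.2) :
    ∃ F : ℂ × ℂ → ℂ, Differentiable ℂ F ∧ ∀ p : ℂ × ℂ, p ≠ 0 → F p = f p := by
  classical
  set Φ := Phi f 0 0 1 with hΦ_def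
  set F : ℂ × ℂ → ℂ := fun p => if p = 0 then Φ 0 else f p with hF_def
  have hFne : ∀ p : ℂ × ℂ, p ≠ 0 → F p = f p := fun p hp => if_neg hp
  have hsph : ContinuousOn f (sphere (0:ℂ) 1 ×ˢ sphere (0:ℂ) 1) := by
    refine hcont.mono fun q hq => ?_
    have : q.1 ≠ 0 := by
      intro h
      have := hq.1
      simp [h] at this
    exact fun hc => this (by simpa using congrArg Prod.fst hc)
  -- Phi agrees with f on the punctured bidisc
  have claim : ∀ q : ℂ × ℂ, q.1 ∈ ball (0:ℂ) 1 → q.2 ∈ ball (0:ℂ) 1 → q ≠ 0 → Φ q = f q := by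
    have case1 : ∀ z w : ℂ, z ∈ ball (0:ℂ) 1 → w ∈ ball (0:ℂ) 1 → w ≠ 0 →
        Φ (z, w) = f (z, w) := by
      intro z w hz hw hwne
      refine phi_eq f 0 0 1 (z, w) (fun s => ?_) ?_ hz hw
      · refine (Differentiable.diffContOnCl ?_)
        intro η
        exact (hsep (circleMap 0 1 s, η) (pair_ne_zero_left (circleMap_ne_center one_ne_zero))).2
      · refine (Differentiable.diffContOnCl ?_)
        intro ζ
        exact (hsep (ζ, w) (pair_ne_zero_right hwne)).1
    intro q hq1 hq2 hqne
    rcases Classical.em (q.2 = 0) with h20 | h20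
    · -- q.2 = 0, q.1 ≠ 0 : limit argument
      have hq1ne : q.1 ≠ 0 := by
        intro h
        exact hqne (Prod.ext h h20)
      set g : ℂ → ℂ := fun w => Φ (q.1, w) - f (q.1, w) with hg_def
      have hgz : g =ᶠ[nhdsWithin (0:ℂ) {0}ᶜ] fun _ => (0:ℂ) := by
        have hball : ball (0:ℂ) 1 ∈ nhdsWithin (0:ℂ) {0}ᶜ :=
          nhdsWithin_le_nhds (ball_mem_nhds _ one_pos)
        filter_upwards [hball, self_mem_nhdsWithin] with w hw hwne
        simp only [hg_def]
        rw [case1 q.1 w hq1 hw hwne, sub_self]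
      have hgc : ContinuousAt g 0 := by
        have hΦc : ContinuousAt (fun w : ℂ => Φ (q.1, w)) 0 := by
          have hd : DifferentiableAt ℂ Φ (q.1, 0) :=
            phi_diff one_pos hsph (by simpa using hq1) (by simp)
          exact hd.continuousAt.comp ((Continuous.prodMk_right q.1).continuousAt)
        have hfc : ContinuousAt (fun w : ℂ => f (q.1, w)) 0 := by
          have : ContinuousAt f (q.1, 0) := by
            refine hcont.continuousAt ?_
            exact (isOpen_compl_singleton).mem_nhds (pair_ne_zero_left hq1ne)
          exact this.comp ((Continuous.prodMk_right q.1).continuousAt)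
        exact hΦc.sub hfc
      have hg0 : g 0 = 0 := by
        have h1 : Filter.Tendsto g (nhdsWithin (0:ℂ) {0}ᶜ) (nhds (g 0)) :=
          hgc.continuousWithinAt.tendsto
        have h2 : Filter.Tendsto g (nhdsWithin (0:ℂ) {0}ᶜ) (nhds 0) := by
          refine Filter.Tendsto.congr' hgz.symm tendsto_const_nhds
        exact tendsto_nhds_unique h1 h2
      have : Φ (q.1, q.2) - f (q.1, q.2) = 0 := by
        rw [h20]
        exact hg0
      have := sub_eq_zero.1 this
      simpa using this
    · have := case1 q.1 q.2 hq1 hq2 h20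
      simpa using this
  refine ⟨F, ?_, hFne⟩
  intro p
  rcases Classical.em (p = 0) with hp | hp
  · subst hp
    have heq : F =ᶠ[nhds (0 : ℂ × ℂ)] Φ := by
      have hopen : (ball (0:ℂ) 1 ×ˢ ball (0:ℂ) 1 : Set (ℂ × ℂ)) ∈ nhds (0 : ℂ × ℂ) :=
        (isOpen_ball.prod isOpen_ball).mem_nhds ⟨mem_ball_self one_pos, mem_ball_self one_pos⟩
      filter_upwards [hopen] with q hq
      rcases Classical.em (q = 0) with hq0 | hq0
      · rw [hq0]; simp [hF_def]
      · rw [hFne q hq0, claim q hq.1 hq.2 hq0]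
    exact (phi_diff one_pos hsph (by simp) (by simp)).congr_of_eventuallyEq heq
  · have heq : F =ᶠ[nhds p] f := by
      have : ({p : ℂ × ℂ | p ≠ 0}) ∈ nhds p := (isOpen_compl_singleton).mem_nhds hp
      filter_upwards [this] with q hq
      exact hFne q hq
    exact (osgood hcont hsep hp).congr_of_eventuallyEq heq

end main
end
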